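/- Suppose the vertex set of a graph G can be partitioned into two nonempty sets L and R with every vertex of L adjacent to every vertex of R. Then G is an OAT graph if and only if both induced subgraphs G[L] and G[R] are OAT graphs. -/
import Mathlib


/-- The disjoint union of two simple graphs. -/
def dUnion {V W : Type} (G : SimpleGraph V) (H : SimpleGraph W) : SimpleGraph (V ⊕ W) :=
  SimpleGraph.fromRel (fun a b =>
    (∃ x y, a = Sum.inl x ∧ b = Sum.inl y ∧ G.Adj x y) ∨
    (∃ x y, a = Sum.inr x ∧ b = Sum.inr y ∧ H.Adj x y))

/-- The join of two simple graphs: all edges between the two sides are added. -/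
def joinG {V W : Type} (G : SimpleGraph V) (H : SimpleGraph W) : SimpleGraph (V ⊕ W) :=
  SimpleGraph.fromRel (fun a b =>
    (∃ x y, a = Sum.inl x ∧ b = Sum.inl y ∧ G.Adj x y) ∨
    (∃ x y, a = Sum.inr x ∧ b = Sum.inr y ∧ H.Adj x y) ∨
    (∃ x y, a = Sum.inl x ∧ b = Sum.inr y))

/-- Adding a new vertex (`none`) whose neighbourhood is the set `X`. When
`X ⊆ N(v)` this is the operation of adding a vertex comparable to `v`. -/
def addComparable {V : Type} (G : SimpleGraph V) (X : Set V) : SimpleGraph (Option V) :=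
  SimpleGraph.fromRel (fun a b =>
    (∃ x y, a = some x ∧ b = some y ∧ G.Adj x y) ∨
    (∃ x, a = none ∧ b = some x ∧ x ∈ X))

/-- Attaching a complete graph on `q` vertices to the vertex `v`: every new
vertex is adjacent to `v` and to every other new vertex. -/
def attachClique {V : Type} (G : SimpleGraph V) (v : V) (q : ℕ) : SimpleGraph (V ⊕ Fin q) :=
  SimpleGraph.fromRel (fun a b =>
    (∃ x y, a = Sum.inl x ∧ b = Sum.inl y ∧ G.Adj x y) ∨
    (∃ i j, a = Sum.inr i ∧ b = Sum.inr j) ∨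
    (∃ i, a = Sum.inl v ∧ b = Sum.inr i))

/-- OAT graphs: graphs constructible from single vertices by disjoint union,
join, adding a comparable vertex, and attaching a clique to a vertex
(up to isomorphism). -/
inductive IsOAT : {V : Type} → SimpleGraph V → Prop
  | single : IsOAT (⊥ : SimpleGraph (Fin 1))
  | dunion {V W : Type} {G : SimpleGraph V} {H : SimpleGraph W} :
      IsOAT G → IsOAT H → IsOAT (dUnion G H)
  | join {V W : Type} {G : SimpleGraph V} {H : SimpleGraph W} :
      IsOAT G → IsOAT H → IsOAT (joinG G H)
  | comparable {V : Type} {G : SimpleGraph V} (v : V) (X : Set V)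
      (hX : X ⊆ G.neighborSet v) : IsOAT G → IsOAT (addComparable G X)
  | clique {V : Type} {G : SimpleGraph V} (v : V) (q : ℕ) (hq : 1 ≤ q) :
      IsOAT G → IsOAT (attachClique G v q)
  | iso {V W : Type} {G : SimpleGraph V} {H : SimpleGraph W} :
      IsOAT G → G ≃g H → IsOAT H


open Sum Set SimpleGraph

section AdjLemmas
variable {V W : Type} {G : SimpleGraph V} {H : SimpleGraph W}

@[simp] lemma dUnion_adj_ll {x y : V} : (dUnion G H).Adj (inl x) (inl y) ↔ G.Adj x y := by
  constructor
  · rintro ⟨hne, (⟨a,b,ha,hb,hadj⟩|⟨a,b,ha,hb,hadj⟩)|(⟨a,b,ha,hb,hadj⟩|⟨a,b,ha,hb,hadj⟩)⟩ <;>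
      simp_all <;> exact hadj.symm
  · intro h; exact ⟨by simp [h.ne], Or.inl (Or.inl ⟨x, y, rfl, rfl, h⟩)⟩

@[simp] lemma dUnion_adj_rr {x y : W} : (dUnion G H).Adj (inr x) (inr y) ↔ H.Adj x y := by
  constructor
  · rintro ⟨hne, (⟨a,b,ha,hb,hadj⟩|⟨a,b,ha,hb,hadj⟩)|(⟨a,b,ha,hb,hadj⟩|⟨a,b,ha,hb,hadj⟩)⟩ <;>
      simp_all <;> exact hadj.symm
  · intro h; exact ⟨by simp [h.ne], Or.inl (Or.inr ⟨x, y, rfl, rfl, h⟩)⟩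

@[simp] lemma dUnion_adj_lr {x : V} {y : W} : ¬ (dUnion G H).Adj (inl x) (inr y) := by
  rintro ⟨hne, (⟨a,b,ha,hb,hadj⟩|⟨a,b,ha,hb,hadj⟩)|(⟨a,b,ha,hb,hadj⟩|⟨a,b,ha,hb,hadj⟩)⟩ <;> simp_all

@[simp] lemma joinG_adj_ll {x y : V} : (joinG G H).Adj (inl x) (inl y) ↔ G.Adj x y := by
  constructor
  · rintro ⟨hne, h | h⟩ <;>
      rcases h with ⟨a,b,ha,hb,hadj⟩|⟨a,b,ha,hb,hadj⟩|⟨a,b,ha,hb⟩ <;> simp_all <;> exact hadj.symm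
  · intro h; exact ⟨by simp [h.ne], Or.inl (Or.inl ⟨x, y, rfl, rfl, h⟩)⟩

@[simp] lemma joinG_adj_rr {x y : W} : (joinG G H).Adj (inr x) (inr y) ↔ H.Adj x y := by
  constructor
  · rintro ⟨hne, h | h⟩ <;>
      rcases h with ⟨a,b,ha,hb,hadj⟩|⟨a,b,ha,hb,hadj⟩|⟨a,b,ha,hb⟩ <;> simp_all <;> exact hadj.symm
  · intro h; exact ⟨by simp [h.ne], Or.inl (Or.inr (Or.inl ⟨x, y, rfl, rfl, h⟩))⟩

@[simp] lemma joinG_adj_lr {x : V} {y : W} : (joinG G H).Adj (inl x) (inr y) := by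
  exact ⟨by simp, Or.inl (Or.inr (Or.inr ⟨x, y, rfl, rfl⟩))⟩

@[simp] lemma addComparable_adj_ss {X : Set V} {x y : V} :
    (addComparable G X).Adj (some x) (some y) ↔ G.Adj x y := by
  constructor
  · rintro ⟨hne, h | h⟩ <;>
      rcases h with ⟨a,b,ha,hb,hadj⟩|⟨a,ha,hb,hX⟩ <;> simp_all <;> exact hadj.symm
  · intro h; exact ⟨by simp [h.ne], Or.inl (Or.inl ⟨x, y, rfl, rfl, h⟩)⟩

@[simp] lemma addComparable_adj_ns {X : Set V} {x : V} :
    (addComparable G X).Adj none (some x) ↔ x ∈ X := by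
  constructor
  · rintro ⟨hne, h | h⟩ <;>
      rcases h with ⟨a,b,ha,hb,hadj⟩|⟨a,ha,hb,hX⟩ <;> simp_all
  · intro h; exact ⟨by simp, Or.inl (Or.inr ⟨x, rfl, rfl, h⟩)⟩

variable {v : V} {q : ℕ}

@[simp] lemma attachClique_adj_ll {x y : V} :
    (attachClique G v q).Adj (inl x) (inl y) ↔ G.Adj x y := by
  constructor
  · rintro ⟨hne, h | h⟩ <;>
      rcases h with ⟨a,b,ha,hb,hadj⟩|⟨a,b,ha,hb⟩|⟨a,ha,hb⟩ <;> simp_all <;> exact hadj.symm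
  · intro h; exact ⟨by simp [h.ne], Or.inl (Or.inl ⟨x, y, rfl, rfl, h⟩)⟩

@[simp] lemma attachClique_adj_rr {i j : Fin q} :
    (attachClique G v q).Adj (inr i) (inr j) ↔ i ≠ j := by
  constructor
  · rintro ⟨hne, _⟩; simp_all
  · intro h; exact ⟨by simp [h], Or.inl (Or.inr (Or.inl ⟨i, j, rfl, rfl⟩))⟩

@[simp] lemma attachClique_adj_lr {x : V} {i : Fin q} :
    (attachClique G v q).Adj (inl x) (inr i) ↔ x = v := by
  constructor
  · rintro ⟨hne, h | h⟩ <;>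
      rcases h with ⟨a,b,ha,hb,hadj⟩|⟨a,b,ha,hb⟩|⟨a,ha,hb⟩ <;> simp_all
  · rintro rfl; exact ⟨by simp, Or.inl (Or.inr (Or.inr ⟨i, rfl, rfl⟩))⟩

end AdjLemmas
section MoreAdj
variable {V W : Type} {G : SimpleGraph V} {H : SimpleGraph W} {v : V} {q : ℕ}

@[simp] lemma dUnion_adj_rl {x : V} {y : W} : ¬ (dUnion G H).Adj (inr y) (inl x) :=
  fun h => dUnion_adj_lr h.symm

@[simp] lemma joinG_adj_rl {x : V} {y : W} : (joinG G H).Adj (inr y) (inl x) :=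
  joinG_adj_lr.symm

@[simp] lemma addComparable_adj_sn {X : Set V} {x : V} :
    (addComparable G X).Adj (some x) none ↔ x ∈ X := by
  rw [SimpleGraph.adj_comm]; exact addComparable_adj_ns

@[simp] lemma attachClique_adj_rl {x : V} {i : Fin q} :
    (attachClique G v q).Adj (inr i) (inl x) ↔ x = v := by
  rw [SimpleGraph.adj_comm]; exact attachClique_adj_lr

end MoreAdj

section Equivs
variable {V W : Type}

def mkIso {α β : Type} {G : SimpleGraph α} {H : SimpleGraph β} (e : α ≃ β)
    (h : ∀ a b, G.Adj a b ↔ H.Adj (e a) (e b)) : G ≃g H :=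
  ⟨e, fun {a b} => (h a b).symm⟩

def eSum (s : Set (V ⊕ W)) : {a // a ∈ s} ≃ {x // inl x ∈ s} ⊕ {w // inr w ∈ s} where
  toFun a := match a with
    | ⟨Sum.inl x, h⟩ => Sum.inl ⟨x, h⟩
    | ⟨Sum.inr w, h⟩ => Sum.inr ⟨w, h⟩
  invFun b := match b with
    | Sum.inl ⟨x, h⟩ => ⟨Sum.inl x, h⟩
    | Sum.inr ⟨w, h⟩ => ⟨Sum.inr w, h⟩
  left_inv := by rintro ⟨x | w, h⟩ <;> rfl
  right_inv := by rintro (⟨x, h⟩ | ⟨w, h⟩) <;> rfl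

def eInl (s : Set (V ⊕ W)) (h : ∀ w, inr w ∉ s) : {a // a ∈ s} ≃ {x // inl x ∈ s} where
  toFun a := match a with
    | ⟨Sum.inl x, hx⟩ => ⟨x, hx⟩
    | ⟨Sum.inr w, hw⟩ => absurd hw (h w)
  invFun x := ⟨Sum.inl x.1, x.2⟩
  left_inv := by
    rintro ⟨x | w, hx⟩
    · rfl
    · exact absurd hx (h w)
  right_inv := by rintro ⟨x, hx⟩; rfl

def eInr (s : Set (V ⊕ W)) (h : ∀ x, inl x ∉ s) : {a // a ∈ s} ≃ {w // inr w ∈ s} where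
  toFun a := match a with
    | ⟨Sum.inl x, hx⟩ => absurd hx (h x)
    | ⟨Sum.inr w, hw⟩ => ⟨w, hw⟩
  invFun x := ⟨Sum.inr x.1, x.2⟩
  left_inv := by
    rintro ⟨x | w, hx⟩
    · exact absurd hx (h x)
    · rfl
  right_inv := by rintro ⟨x, hx⟩; rfl

def eOption (s : Set (Option V)) (h : none ∈ s) :
    {a // a ∈ s} ≃ Option {x // some x ∈ s} where
  toFun a := match a with
    | ⟨none, _⟩ => none
    | ⟨some x, hx⟩ => some ⟨x, hx⟩
  invFun b := match b with
    | none => ⟨none, h⟩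
    | some ⟨x, hx⟩ => ⟨some x, hx⟩
  left_inv := by rintro ⟨_ | x, hx⟩ <;> rfl
  right_inv := by rintro (_ | ⟨x, hx⟩) <;> rfl

def eSome (s : Set (Option V)) (h : none ∉ s) : {a // a ∈ s} ≃ {x // some x ∈ s} where
  toFun a := match a with
    | ⟨none, hx⟩ => absurd hx h
    | ⟨some x, hx⟩ => ⟨x, hx⟩
  invFun x := ⟨some x.1, x.2⟩
  left_inv := by
    rintro ⟨_ | x, hx⟩
    · exact absurd hx h
    · rfl
  right_inv := by rintro ⟨x, hx⟩; rfl

end Equivs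

section Basic

lemma IsOAT.nonempty {V : Type} {G : SimpleGraph V} (h : IsOAT G) : Nonempty V := by
  induction h with
  | single => exact ⟨0⟩
  | dunion _ _ ih _ => exact ⟨inl ih.some⟩
  | join _ _ ih _ => exact ⟨inl ih.some⟩
  | comparable v X hX _ _ => exact ⟨none⟩
  | clique v q hq _ ih => exact ⟨inl ih.some⟩
  | iso _ e ih => exact ⟨e ih.some⟩

lemma oat_of_unique {α : Type} (G : SimpleGraph α) (a : α) (ha : ∀ b, b = a) : IsOAT G := by
  refine IsOAT.iso IsOAT.single (mkIso ⟨fun _ => a, fun _ => 0, fun x => Subsingleton.elim _ _,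
    fun b => (ha b).symm⟩ ?_)
  intro x y
  simp only [SimpleGraph.bot_adj, false_iff, Equiv.coe_fn_mk]
  exact G.irrefl

lemma top_fin_oat (n : ℕ) : IsOAT (⊤ : SimpleGraph (Fin (n + 1))) := by
  induction n with
  | zero => exact oat_of_unique _ 0 (fun b => Fin.ext (by omega))
  | succ n ih =>
      refine IsOAT.iso (IsOAT.join (G := (⊥ : SimpleGraph (Fin 1))) IsOAT.single ih)
        (mkIso (finSumFinEquiv.trans (finCongr (by omega))) ?_)
      intro a b
      rw [SimpleGraph.top_adj, Ne, Equiv.apply_eq_iff_eq]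
      rcases a with a | a <;> rcases b with b | b
      · simp [Subsingleton.elim a b]
      · simp
      · simp
      · simp [Ne]

lemma top_oat {α : Type} [Finite α] [Nonempty α] : IsOAT (⊤ : SimpleGraph α) := by
  obtain ⟨n, ⟨e⟩⟩ := Finite.exists_equiv_fin α
  cases n with
  | zero => exact (e ‹Nonempty α›.some).elim0
  | succ n => exact IsOAT.iso (top_fin_oat n) (SimpleGraph.Iso.completeGraph e.symm)

end Basic
section Isos
variable {V W : Type}

/-- Pure-inl induced subgraph iso. -/
def pureInl {G : SimpleGraph V} {K : SimpleGraph (V ⊕ W)}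
    (hll : ∀ x y, K.Adj (inl x) (inl y) ↔ G.Adj x y)
    (L : Set (V ⊕ W)) (h : ∀ w, inr w ∉ L) :
    G.induce {x | inl x ∈ L} ≃g K.induce L :=
  mkIso (eInl L h).symm (by
    rintro ⟨a, ha⟩ ⟨b, hb⟩
    simp only [SimpleGraph.comap_adj]
    exact (hll a b).symm)

def pureInr {H : SimpleGraph W} {K : SimpleGraph (V ⊕ W)}
    (hrr : ∀ x y, K.Adj (inr x) (inr y) ↔ H.Adj x y)
    (L : Set (V ⊕ W)) (h : ∀ x, inl x ∉ L) :
    H.induce {y | inr y ∈ L} ≃g K.induce L :=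
  mkIso (eInr L h).symm (by
    rintro ⟨a, ha⟩ ⟨b, hb⟩
    simp only [SimpleGraph.comap_adj]
    exact (hrr a b).symm)

def splitJoin {G : SimpleGraph V} {H : SimpleGraph W} {K : SimpleGraph (V ⊕ W)}
    (L : Set (V ⊕ W))
    (hll : ∀ x y, K.Adj (inl x) (inl y) ↔ G.Adj x y)
    (hrr : ∀ x y, K.Adj (inr x) (inr y) ↔ H.Adj x y)
    (hlr : ∀ x, inl x ∈ L → ∀ y, inr y ∈ L → K.Adj (inl x) (inr y)) :
    joinG (G.induce {x | inl x ∈ L}) (H.induce {y | inr y ∈ L}) ≃g K.induce L :=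
  mkIso (eSum L).symm (by
    rintro (⟨a, ha⟩ | ⟨a, ha⟩) (⟨b, hb⟩ | ⟨b, hb⟩) <;>
      simp only [SimpleGraph.comap_adj, joinG_adj_ll, joinG_adj_rr, joinG_adj_lr, joinG_adj_rl,
        eSum, Equiv.coe_fn_mk]
    · exact (hll a b).symm
    · simp [hlr a ha b hb]
    · simp [(hlr b hb a ha).symm]
    · exact (hrr a b).symm)

def splitDUnion {G : SimpleGraph V} {H : SimpleGraph W} {K : SimpleGraph (V ⊕ W)}
    (L : Set (V ⊕ W))
    (hll : ∀ x y, K.Adj (inl x) (inl y) ↔ G.Adj x y)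
    (hrr : ∀ x y, K.Adj (inr x) (inr y) ↔ H.Adj x y)
    (hlr : ∀ x, inl x ∈ L → ∀ y, inr y ∈ L → ¬ K.Adj (inl x) (inr y)) :
    dUnion (G.induce {x | inl x ∈ L}) (H.induce {y | inr y ∈ L}) ≃g K.induce L :=
  mkIso (eSum L).symm (by
    rintro (⟨a, ha⟩ | ⟨a, ha⟩) (⟨b, hb⟩ | ⟨b, hb⟩) <;>
      simp only [SimpleGraph.comap_adj, dUnion_adj_ll, dUnion_adj_rr, eSum,
        Equiv.coe_fn_mk]
    · exact (hll a b).symm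
    · simp [hlr a ha b hb]
    · simp only [dUnion_adj_rl, false_iff]
      exact fun hadj => hlr b hb a ha hadj.symm
    · exact (hrr a b).symm)

def splitOption {G : SimpleGraph V} {K : SimpleGraph (Option V)} (X : Set V)
    (hss : ∀ x y, K.Adj (some x) (some y) ↔ G.Adj x y)
    (hns : ∀ x, K.Adj none (some x) ↔ x ∈ X)
    (L : Set (Option V)) (hnone : none ∈ L) :
    addComparable (G.induce {x | some x ∈ L}) {x | (x : V) ∈ X} ≃g K.induce L :=
  mkIso (eOption L hnone).symm (by
    rintro (_ | ⟨a, ha⟩) (_ | ⟨b, hb⟩) <;>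
      simp only [SimpleGraph.comap_adj, eOption, Equiv.coe_fn_mk]
    · exact iff_of_false (fun h => h.ne rfl) (fun h => h.ne rfl)
    · simp [hns]
    · rw [SimpleGraph.adj_comm, K.adj_comm]
      simp [hns]
    · simp [hss])

end Isos

lemma piece {V : Type} {G : SimpleGraph V} (hG : IsOAT G)
    (IH : ∀ L : Set V, L.Nonempty → Lᶜ.Nonempty →
      (∀ x ∈ L, ∀ y, y ∉ L → G.Adj x y) → IsOAT (G.induce L))
    (S : Set V) (hS : S.Nonempty)
    (hcross : ∀ x ∈ S, ∀ y, y ∉ S → G.Adj x y) : IsOAT (G.induce S) := by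
  by_cases h : Sᶜ.Nonempty
  · exact IH S hS h hcross
  · have hU : S = Set.univ := by
      rw [← compl_empty_iff]
      exact Set.not_nonempty_iff_eq_empty.mp h
    subst hU
    exact IsOAT.iso hG (SimpleGraph.induceUnivIso G).symm
lemma oneSide {V : Type} {G : SimpleGraph V} (h : IsOAT G) :
    ∀ L : Set V, L.Nonempty → Lᶜ.Nonempty →
      (∀ x ∈ L, ∀ y, y ∉ L → G.Adj x y) → IsOAT (G.induce L) := by
  induction h with
  | single =>
      intro L hL hR _
      obtain ⟨a, ha⟩ := hL; obtain ⟨b, hb⟩ := hR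
      exact absurd (Subsingleton.elim a b ▸ ha) hb
  | @dunion V W G H hG hH ihG ihH =>
      intro L hL hR hcross
      exfalso
      obtain ⟨v0⟩ := hG.nonempty; obtain ⟨w0⟩ := hH.nonempty
      by_cases h1 : inl v0 ∈ L <;> by_cases h2 : inr w0 ∈ L
      · obtain ⟨b, hb⟩ := hR
        rcases b with x | w
        · exact dUnion_adj_rl (hcross _ h2 _ hb)
        · exact dUnion_adj_lr (hcross _ h1 _ hb)
      · exact dUnion_adj_lr (hcross _ h1 _ h2)
      · exact dUnion_adj_rl (hcross _ h2 _ h1)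
      · obtain ⟨a, ha⟩ := hL
        rcases a with x | w
        · exact dUnion_adj_lr (hcross _ ha _ h2)
        · exact dUnion_adj_rl (hcross _ ha _ h1)
  | @join V W G H hG hH ihG ihH =>
      intro L hL hR hcross
      have crossG : ∀ x ∈ {x | inl x ∈ L}, ∀ y, y ∉ {x | inl x ∈ L} → G.Adj x y := by
        intro x hx y hy
        have := hcross _ hx _ hy
        rwa [joinG_adj_ll] at this
      have crossH : ∀ x ∈ {y | inr y ∈ L}, ∀ y, y ∉ {y | inr y ∈ L} → H.Adj x y := by
        intro x hx y hy
        have := hcross _ hx _ hy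
        rwa [joinG_adj_rr] at this
      by_cases h1 : ({x | inl x ∈ L} : Set V).Nonempty <;>
        by_cases h2 : ({y | inr y ∈ L} : Set W).Nonempty
      · exact IsOAT.iso
          (IsOAT.join (piece hG ihG _ h1 crossG) (piece hH ihH _ h2 crossH))
          (splitJoin L (fun _ _ => joinG_adj_ll) (fun _ _ => joinG_adj_rr)
            (fun x _ y _ => joinG_adj_lr))
      · exact IsOAT.iso (piece hG ihG _ h1 crossG)
          (pureInl (fun _ _ => joinG_adj_ll) L (fun w hw => h2 ⟨w, hw⟩))
      · exact IsOAT.iso (piece hH ihH _ h2 crossH)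
          (pureInr (fun _ _ => joinG_adj_rr) L (fun x hx => h1 ⟨x, hx⟩))
      · obtain ⟨a, ha⟩ := hL
        rcases a with x | w
        · exact absurd ⟨x, ha⟩ h1
        · exact absurd ⟨w, ha⟩ h2
  | @comparable V G v X hX hG ih =>
      intro L hL hR hcross
      by_cases hn : none ∈ L
      · -- the side containing the new vertex
        by_cases h0 : ({x | some x ∈ L} : Set V).Nonempty
        · -- v must be in L
          have hv : some v ∈ L := by
            by_contra hv
            have := hcross _ hn _ hv
            rw [addComparable_adj_ns] at this
            exact G.irrefl (hX this)
          have cross0 : ∀ x ∈ {x | some x ∈ L}, ∀ y, y ∉ {x | some x ∈ L} → G.Adj x y := by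
            intro x hx y hy
            have := hcross _ hx _ hy
            rwa [addComparable_adj_ss] at this
          refine IsOAT.iso (IsOAT.comparable (G := G.induce {x | some x ∈ L}) (⟨v, hv⟩ : {x // some x ∈ L}) {x | (x : V) ∈ X} ?_
            (piece hG ih _ h0 cross0))
            (splitOption X (fun _ _ => addComparable_adj_ss) (fun _ => addComparable_adj_ns)
              L hn)
          intro x hx
          exact hX hx
        · -- L = {none}
          refine oat_of_unique ((addComparable G X).induce L) ⟨none, hn⟩ ?_
          rintro ⟨_ | b, hb⟩
          · rfl
          · exact absurd ⟨b, hb⟩ h0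
      · -- pure `some` side
        obtain ⟨a, ha⟩ := hL
        rcases a with _ | x
        · exact absurd ha hn
        · have cross0 : ∀ x ∈ {x | some x ∈ L}, ∀ y, y ∉ {x | some x ∈ L} → G.Adj x y := by
            intro x hx y hy
            have := hcross _ hx _ hy
            rwa [addComparable_adj_ss] at this
          refine IsOAT.iso (piece hG ih _ ⟨x, ha⟩ cross0) (mkIso (eSome L hn).symm ?_)
          rintro ⟨a, ha'⟩ ⟨b, hb'⟩
          simp only [SimpleGraph.comap_adj]
          exact addComparable_adj_ss.symm
  | @clique V G v q hq hG ih =>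
      intro L hL hR hcross
      have cross0 : ∀ x ∈ {x | inl x ∈ L}, ∀ y, y ∉ {x | inl x ∈ L} → G.Adj x y := by
        intro x hx y hy
        have := hcross _ hx _ hy
        rwa [attachClique_adj_ll] at this
      by_cases hLr : ∃ i : Fin q, inr i ∈ L
      · obtain ⟨i0, hi0⟩ := hLr
        by_cases hRr : ∃ j : Fin q, inr j ∉ L
        · -- case (iii): complete graph
          obtain ⟨j0, hj0⟩ := hRr
          have hall : ∀ x : V, x = v := by
            intro x
            by_cases hx : inl x ∈ L
            · exact attachClique_adj_lr.mp (hcross _ hx _ hj0)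
            · exact attachClique_adj_rl.mp (hcross _ hi0 _ hx)
          have hfin : L.Finite := by
            apply Set.Finite.subset (Set.finite_singleton (inl v) |>.union (Set.finite_range inr))
            rintro (x | i) _
            · exact Or.inl (by simp [hall x])
            · exact Or.inr ⟨i, rfl⟩
          have : Finite ↥L := hfin.to_subtype
          have hne : Nonempty ↥L := ⟨⟨_, hi0⟩⟩
          refine IsOAT.iso (top_oat (α := ↥L)) (mkIso (Equiv.refl _) ?_)
          rintro ⟨a, ha⟩ ⟨b, hb⟩
          simp only [SimpleGraph.top_adj, Equiv.refl_apply, SimpleGraph.comap_adj, ne_eq,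
            Subtype.mk.injEq]
          constructor
          · intro hab
            rcases a with x | i <;> rcases b with y | j
            · exact absurd (by rw [hall x, hall y]) hab
            · exact attachClique_adj_lr.mpr (hall x)
            · exact attachClique_adj_rl.mpr (hall y)
            · exact attachClique_adj_rr.mpr (by simpa using hab)
          · exact fun hadj => hadj.ne
        · -- case (ii): Lᶜ = {inl v}
          push_neg at hRr
          have hvL : inl v ∉ L := by
            obtain ⟨b, hb⟩ := hR
            rcases b with x | j
            · have : x = v := attachClique_adj_rl.mp (hcross _ hi0 _ hb)
              rwa [this] at hb
            · exact absurd (hRr j) hb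
          have hmem : ∀ a, a ∉ L → a = inl v := by
            rintro (x | j) ha
            · rw [attachClique_adj_rl.mp (hcross _ hi0 _ ha)]
            · exact absurd (hRr j) ha
          -- top part is all of Fin q
          have htop : IsOAT ((⊤ : SimpleGraph (Fin q)).induce {j | inr j ∈ L}) := by
            have : Nonempty ↥{j : Fin q | inr j ∈ L} := ⟨⟨i0, hi0⟩⟩
            have heq : ((⊤ : SimpleGraph (Fin q)).induce {j | inr j ∈ L}) = ⊤ := by
              ext a b
              simp [Subtype.coe_injective.ne_iff]
            rw [heq]
            exact top_oat
          by_cases h1 : ({x | inl x ∈ L} : Set V).Nonempty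
          · refine IsOAT.iso (IsOAT.dunion (piece hG ih _ h1 cross0) htop)
              (splitDUnion L (fun _ _ => attachClique_adj_ll)
                (fun i j => by simp) ?_)
            intro x hx j _ hadj
            exact hvL (attachClique_adj_lr.mp hadj ▸ hx)
          · exact IsOAT.iso htop
              (pureInr (fun i j => by simp) L (fun x hx => h1 ⟨x, hx⟩))
      · -- case (i): no inr in L
        push_neg at hLr
        have h1 : ({x | inl x ∈ L} : Set V).Nonempty := by
          obtain ⟨a, ha⟩ := hL
          rcases a with x | i
          · exact ⟨x, ha⟩
          · exact absurd ha (hLr i)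
        exact IsOAT.iso (piece hG ih _ h1 cross0)
          (pureInl (fun _ _ => attachClique_adj_ll) L hLr)
  | @iso V W G H hG e ih =>
      intro L hL hR hcross
      have hL' : (⇑e ⁻¹' L).Nonempty := by
        obtain ⟨b, hb⟩ := hL
        exact ⟨e.symm b, by simp [Set.mem_preimage, hb]⟩
      have hR' : (⇑e ⁻¹' L)ᶜ.Nonempty := by
        obtain ⟨b, hb⟩ := hR
        exact ⟨e.symm b, by simp [Set.mem_preimage]; simpa using hb⟩
      have hcross' : ∀ x ∈ ⇑e ⁻¹' L, ∀ y, y ∉ ⇑e ⁻¹' L → G.Adj x y := by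
        intro x hx y hy
        have := hcross _ hx _ hy
        exact e.map_rel_iff.mp this
      refine IsOAT.iso (ih _ hL' hR' hcross')
        (mkIso (e.toEquiv.subtypeEquiv (fun a => Iff.rfl)) ?_)
      rintro ⟨a, ha⟩ ⟨b, hb⟩
      simp only [SimpleGraph.comap_adj]
      exact e.map_rel_iff.symm

/-- If `V(G)` is partitioned into nonempty sets `L` and `Lᶜ` with every vertex of `L` adjacent to
every vertex of `Lᶜ`, then `G` is OAT iff both induced subgraphs are OAT. -/
theorem stmt10 {V : Type} [Fintype V] (G : SimpleGraph V) (L : Set V)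
    (hL : L.Nonempty) (hR : Lᶜ.Nonempty)
    (hjoin : ∀ x ∈ L, ∀ y ∈ Lᶜ, G.Adj x y) :
    IsOAT G ↔ (IsOAT (G.induce L) ∧ IsOAT (G.induce Lᶜ)) := by
  constructor
  · intro h
    refine ⟨oneSide h L hL hR (fun x hx y hy => hjoin x hx y hy),
      oneSide h Lᶜ hR (by rwa [compl_compl]) ?_⟩
    intro x hx y hy
    exact (hjoin y (by simpa using hy) x hx).symm
  · rintro ⟨h1, h2⟩
    classical
    refine IsOAT.iso (IsOAT.join h1 h2) (mkIso (Equiv.Set.sumCompl L) ?_)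
    rintro (⟨a, ha⟩ | ⟨a, ha⟩) (⟨b, hb⟩ | ⟨b, hb⟩) <;>
      simp only [Equiv.Set.sumCompl_apply_inl, Equiv.Set.sumCompl_apply_inr,
        joinG_adj_ll, joinG_adj_rr, joinG_adj_lr, joinG_adj_rl, SimpleGraph.comap_adj]
    · exact Iff.rfl
    · simp [hjoin a ha b hb]
    · simp [(hjoin b hb a ha).symm]
    · exact Iff.rfl
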